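/- A linear operator D on π₃ is a derivation of π₃ if and only if there exist complex numbers a₁₁, a₂₁, a₃₁, a₅₁, a₃₄, a₅₄ such that the matrix of D is [[a₁₁,0,0,0,0],[a₂₁,2a₁₁,0,0,0],[a₃₁,2a₂₁,3a₁₁,a₃₄,0],[0,0,0,a₁₁,0],[a₅₁,0,0,a₅₄,2a₁₁]]. -/

import Mathlib

noncomputable section

/-- The multiplication of the 5-dimensional naturally graded nilpotent associative
algebra `π₃`, given on the basis `e₁, …, e₅` (indices `0, …, 4`) by
`e₁e₁ = e₂`, `e₁e₂ = e₂e₁ = e₃`, `e₁e₄ = e₅`, `e₄e₄ = e₅`. -/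
def pi3Mul (x y : Fin 5 → ℂ) : Fin 5 → ℂ :=
  ![0, x 0 * y 0, x 0 * y 1 + x 1 * y 0, 0, x 0 * y 3 + x 3 * y 3]

/-- A derivation of `π₃`: a linear operator satisfying the Leibniz rule. -/
def IsPi3Der (D : (Fin 5 → ℂ) →ₗ[ℂ] (Fin 5 → ℂ)) : Prop :=
  ∀ x y, D (pi3Mul x y) = pi3Mul (D x) y + pi3Mul x (D y)

theorem pi3_der_iff (D : (Fin 5 → ℂ) →ₗ[ℂ] (Fin 5 → ℂ)) :
    IsPi3Der D ↔
      ∃ a11 a21 a31 a51 a34 a54 : ℂ,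
        LinearMap.toMatrix' D =
          !![a11, 0, 0, 0, 0;
             a21, 2 * a11, 0, 0, 0;
             a31, 2 * a21, 3 * a11, a34, 0;
             0, 0, 0, a11, 0;
             a51, 0, 0, a54, 2 * a11] := by
  constructor
  · intro h
    set e : Fin 5 → (Fin 5 → ℂ) := fun j j' => if j' = j then 1 else 0 with he
    have m00 : pi3Mul (e 0) (e 0) = e 1 := by
      funext i; fin_cases i <;> simp [pi3Mul, he]
    have m01 : pi3Mul (e 0) (e 1) = e 2 := by
      funext i; fin_cases i <;> simp [pi3Mul, he]
    have m30 : pi3Mul (e 3) (e 0) = 0 := by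
      funext i; fin_cases i <;> simp [pi3Mul, he]
    have m03 : pi3Mul (e 0) (e 3) = e 4 := by
      funext i; fin_cases i <;> simp [pi3Mul, he]
    have m33 : pi3Mul (e 3) (e 3) = e 4 := by
      funext i; fin_cases i <;> simp [pi3Mul, he]
    have h00 := h (e 0) (e 0); rw [m00] at h00
    have h01 := h (e 0) (e 1); rw [m01] at h01
    have h30 := h (e 3) (e 0); rw [m30, map_zero] at h30
    have h03 := h (e 0) (e 3); rw [m03] at h03
    have h33 := h (e 3) (e 3); rw [m33] at h33
    have A0 := congrFun h00 0
    have A1 := congrFun h00 1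
    have A2 := congrFun h00 2
    have A3 := congrFun h00 3
    have A4 := congrFun h00 4
    have B0 := congrFun h01 0
    have B1 := congrFun h01 1
    have B2 := congrFun h01 2
    have B3 := congrFun h01 3
    have B4 := congrFun h01 4
    have C1 := congrFun h30 1
    have C2 := congrFun h30 2
    have C4 := congrFun h30 4
    have E0 := congrFun h03 0
    have E1 := congrFun h03 1
    have E2 := congrFun h03 2
    have E3 := congrFun h03 3
    have E4 := congrFun h03 4
    have F4 := congrFun h33 4
    simp [pi3Mul, he] at A0 A1 A2 A3 A4 B0 B1 B2 B3 B4 C1 C2 C4 E0 E1 E2 E3 E4 F4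
    refine ⟨D (e 0) 0, D (e 0) 1, D (e 0) 2, D (e 0) 4, D (e 3) 2, D (e 3) 4, ?_⟩
    ext i j
    have hs : ∀ j : Fin 5, (Pi.single j (1:ℂ) : Fin 5 → ℂ) = fun j' => if j' = j then 1 else 0 := fun j => by
      funext j'; simp [Pi.single_apply]
    rw [LinearMap.toMatrix'_apply, hs]
    fin_cases i <;> fin_cases j
    · simp [LinearMap.toMatrix'_apply, he, Matrix.vecHead, Matrix.vecTail]
    · simp [LinearMap.toMatrix'_apply, he, Matrix.vecHead, Matrix.vecTail]
      linear_combination A0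
    · simp [LinearMap.toMatrix'_apply, he, Matrix.vecHead, Matrix.vecTail]
      linear_combination B0
    · simp [LinearMap.toMatrix'_apply, he, Matrix.vecHead, Matrix.vecTail]
      linear_combination -C1
    · simp [LinearMap.toMatrix'_apply, he, Matrix.vecHead, Matrix.vecTail]
      linear_combination E0
    · simp [LinearMap.toMatrix'_apply, he, Matrix.vecHead, Matrix.vecTail]
    · simp [LinearMap.toMatrix'_apply, he, Matrix.vecHead, Matrix.vecTail]
      linear_combination A1
    · simp [LinearMap.toMatrix'_apply, he, Matrix.vecHead, Matrix.vecTail]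
      linear_combination B1 + A0
    · simp [LinearMap.toMatrix'_apply, he, Matrix.vecHead, Matrix.vecTail]
      linear_combination -C2
    · simp [LinearMap.toMatrix'_apply, he, Matrix.vecHead, Matrix.vecTail]
      linear_combination E1 - C1
    · simp [LinearMap.toMatrix'_apply, he, Matrix.vecHead, Matrix.vecTail]
    · simp [LinearMap.toMatrix'_apply, he, Matrix.vecHead, Matrix.vecTail]
      linear_combination A2
    · simp [LinearMap.toMatrix'_apply, he, Matrix.vecHead, Matrix.vecTail]
      linear_combination B2 + A1
    · simp [LinearMap.toMatrix'_apply, he, Matrix.vecHead, Matrix.vecTail]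
    · simp [LinearMap.toMatrix'_apply, he, Matrix.vecHead, Matrix.vecTail]
      linear_combination E2 - C2
    · simp [LinearMap.toMatrix'_apply, he, Matrix.vecHead, Matrix.vecTail]
      linear_combination -C4
    · simp [LinearMap.toMatrix'_apply, he, Matrix.vecHead, Matrix.vecTail]
      linear_combination A3
    · simp [LinearMap.toMatrix'_apply, he, Matrix.vecHead, Matrix.vecTail]
      linear_combination B3
    · simp [LinearMap.toMatrix'_apply, he, Matrix.vecHead, Matrix.vecTail]
      linear_combination E4 - F4 + C1 - C4
    · simp [LinearMap.toMatrix'_apply, he, Matrix.vecHead, Matrix.vecTail]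
      linear_combination E3
    · simp [LinearMap.toMatrix'_apply, he, Matrix.vecHead, Matrix.vecTail]
    · simp [LinearMap.toMatrix'_apply, he, Matrix.vecHead, Matrix.vecTail]
      linear_combination A4 - C4
    · simp [LinearMap.toMatrix'_apply, he, Matrix.vecHead, Matrix.vecTail]
      linear_combination B4 + A3
    · simp [LinearMap.toMatrix'_apply, he, Matrix.vecHead, Matrix.vecTail]
    · simp [LinearMap.toMatrix'_apply, he, Matrix.vecHead, Matrix.vecTail]
      linear_combination 2 * E4 - F4 + C1 - 2 * C4
  · rintro ⟨a11, a21, a31, a51, a34, a54, hM⟩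
    have hD : ∀ x, D x =
        Matrix.mulVec !![a11, 0, 0, 0, 0;
             a21, 2 * a11, 0, 0, 0;
             a31, 2 * a21, 3 * a11, a34, 0;
             0, 0, 0, a11, 0;
             a51, 0, 0, a54, 2 * a11] x := by
      intro x
      rw [← hM, ← Matrix.toLin'_apply, Matrix.toLin'_toMatrix']
    intro x y
    funext i
    fin_cases i <;>
      simp [hD, pi3Mul, Matrix.mulVec, dotProduct, Fin.sum_univ_five] <;> ring
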